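/- Let X be a complete normed real vector space, let B : X → X be a γ-contraction with γ ∈ (0,1) and fixed point Q*, and let M > 0, ε > 0 be given. Then there exist L ∈ ℕ and ε₁ > 0 (one may take ε₁ = ε(1 − γ)/2) such that for every sequence (Q̂_l) in X with ‖Q̂_0 − Q*‖ ≤ M and ‖Q̂_{l+1} − B(Q̂_l)‖ ≤ ε₁ for all l < L, one has ‖Q̂_L − Q*‖ < ε. -/
import Mathlib


/-- Quantitative UAT skeleton: for a `γ`-contraction `B` with fixed point `Q*`,
given an a priori bound `M` on the initial error and a target accuracy `ε`, there is a depth `L`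
and a per-layer accuracy `ε₁` (one may take `ε₁ = ε (1 - γ) / 2`) such that every perturbed
value-iteration sequence with per-step error at most `ε₁` satisfies `‖Q̂_L - Q*‖ < ε`. -/
theorem depth_and_accuracy_selection
    {X : Type*} [NormedAddCommGroup X] [NormedSpace ℝ X] [CompleteSpace X]
    (B : X → X) (γ : ℝ) (hγ0 : 0 < γ) (hγ1 : γ < 1)
    (hB : ∀ x y : X, ‖B x - B y‖ ≤ γ * ‖x - y‖)
    (Qstar : X) (hfix : B Qstar = Qstar)
    (M ε : ℝ) (hM : 0 < M) (hε : 0 < ε) :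
    ∃ (L : ℕ) (ε₁ : ℝ), 0 < ε₁ ∧ ε₁ = ε * (1 - γ) / 2 ∧
      ∀ Qhat : ℕ → X, ‖Qhat 0 - Qstar‖ ≤ M →
        (∀ l < L, ‖Qhat (l + 1) - B (Qhat l)‖ ≤ ε₁) →
        ‖Qhat L - Qstar‖ < ε := by
  have h1γ : 0 < 1 - γ := by linarith
  -- choose L with γ^L * M < ε/2
  obtain ⟨L, hL⟩ : ∃ L : ℕ, γ ^ L < (ε / 2) / M := by
    exact exists_pow_lt_of_lt_one (by positivity) hγ1
  refine ⟨L, ε * (1 - γ) / 2, by positivity, rfl, ?_⟩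
  intro Qhat h0 hstep
  set ε₁ := ε * (1 - γ) / 2 with hε₁
  have key : ∀ l ≤ L, ‖Qhat l - Qstar‖ ≤ γ ^ l * M + ε₁ * (1 - γ ^ l) / (1 - γ) := by
    intro l hl
    induction l with
    | zero => simpa using h0
    | succ n ih =>
      have hn : n ≤ L := Nat.le_of_succ_le hl
      have ihn := ih hn
      have hs := hstep n (Nat.lt_of_succ_le hl)
      have : ‖Qhat (n + 1) - Qstar‖ ≤ ε₁ + γ * ‖Qhat n - Qstar‖ := by
        calc ‖Qhat (n + 1) - Qstar‖
            = ‖(Qhat (n + 1) - B (Qhat n)) + (B (Qhat n) - B Qstar)‖ := by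
              rw [hfix, sub_add_sub_cancel]
          _ ≤ ‖Qhat (n + 1) - B (Qhat n)‖ + ‖B (Qhat n) - B Qstar‖ := norm_add_le _ _
          _ ≤ ε₁ + γ * ‖Qhat n - Qstar‖ := add_le_add hs (hB _ _)
      have h2 : γ * ‖Qhat n - Qstar‖ ≤ γ * (γ ^ n * M + ε₁ * (1 - γ ^ n) / (1 - γ)) :=
        mul_le_mul_of_nonneg_left ihn hγ0.le
      have : ‖Qhat (n + 1) - Qstar‖ ≤ ε₁ + γ * (γ ^ n * M + ε₁ * (1 - γ ^ n) / (1 - γ)) := by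
        linarith
      calc ‖Qhat (n + 1) - Qstar‖
          ≤ ε₁ + γ * (γ ^ n * M + ε₁ * (1 - γ ^ n) / (1 - γ)) := this
        _ = γ ^ (n + 1) * M + ε₁ * (1 - γ ^ (n + 1)) / (1 - γ) := by
            field_simp; ring
  have hkey := key L le_rfl
  have hpow : γ ^ L * M < ε / 2 := (lt_div_iff₀ hM).mp hL
  have hpowL : 0 < γ ^ L := pow_pos hγ0 L
  have htail : ε₁ * (1 - γ ^ L) / (1 - γ) ≤ ε / 2 := by
    rw [hε₁]
    rw [div_le_iff₀ h1γ]
    nlinarith [mul_pos (mul_pos hε hpowL) h1γ]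
  linarith
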